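/- Let f: M → M satisfy f*ω = aω with a ∈ (0,1), and let j: 𝕋^m → M be a C¹ embedding with f(j(𝕋^m)) = j(𝕋^m) such that j⁻¹ ∘ f ∘ j is the rotation R_β(θ) = θ + β on 𝕋^m. Then the pullback j*ω is zero, i.e. the torus j(𝕋^m) is isotropic. -/

import Mathlib

open Set

/-- (Calleja–Celletti–de la Llave) Let `f` be conformally symplectic (`f*Ω = aΩ`,
`a ∈ (0,1)`) and `j` a `C¹` embedded invariant torus (a ℤᵐ-periodic parametrization)
on which `f` is conjugate to the rotation by `β`: `f ∘ j = j ∘ (· + β)`. Then the torus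
is isotropic: the pullback `j*Ω` vanishes. -/
theorem invariant_rotational_torus_isotropic
    {E : Type*} [NormedAddCommGroup E] [NormedSpace ℝ E]
    (m : ℕ)
    (Ω : E → E →L[ℝ] E →L[ℝ] ℝ) (hΩc : Continuous Ω)
    (f : E → E) (hf : Differentiable ℝ f)
    (a : ℝ) (ha : a ∈ Set.Ioo (0:ℝ) 1)
    (hpull : ∀ z u v, Ω (f z) (fderiv ℝ f z u) (fderiv ℝ f z v) = a * Ω z u v)
    (j : (Fin m → ℝ) → E) (hj : ContDiff ℝ 1 j)
    (hper : ∀ (θ : Fin m → ℝ) (z : Fin m → ℤ), j (θ + fun i => (z i : ℝ)) = j θ)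
    (β : Fin m → ℝ)
    (hconj : ∀ θ, f (j θ) = j (θ + β)) :
    ∀ θ u v, Ω (j θ) (fderiv ℝ j θ u) (fderiv ℝ j θ v) = 0 := by
  intro θ₀ u v
  have hjd : Differentiable ℝ j := hj.differentiable one_ne_zero
  -- derivative of a shifted function
  have hshift : ∀ (c θ : Fin m → ℝ),
      fderiv ℝ (fun ψ => j (ψ + c)) θ = fderiv ℝ j (θ + c) := by
    intro c θ
    have h1 : HasFDerivAt (fun ψ : Fin m → ℝ => ψ + c)
        (ContinuousLinearMap.id ℝ (Fin m → ℝ)) θ := (hasFDerivAt_id θ).add_const c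
    have h2 := ((hjd (θ + c)).hasFDerivAt.comp θ h1).fderiv
    simpa [Function.comp_def] using h2
  -- periodicity of the derivative
  have hDper : ∀ (θ : Fin m → ℝ) (z : Fin m → ℤ),
      fderiv ℝ j (θ + fun i => (z i : ℝ)) = fderiv ℝ j θ := by
    intro θ z
    have : (fun ψ => j (ψ + fun i => (z i : ℝ))) = j := funext fun ψ => hper ψ z
    rw [← hshift (fun i => (z i : ℝ)) θ, this]
  -- the scalar function
  set g : (Fin m → ℝ) → ℝ :=
    fun θ => Ω (j θ) (fderiv ℝ j θ u) (fderiv ℝ j θ v) with hgdef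
  have hDc : Continuous (fderiv ℝ j) := hj.continuous_fderiv one_ne_zero
  have hgc : Continuous g := by
    apply Continuous.clm_apply
    · apply Continuous.clm_apply
      · exact hΩc.comp hjd.continuous
      · exact (ContinuousLinearMap.apply ℝ E u).continuous.comp hDc
    · exact (ContinuousLinearMap.apply ℝ E v).continuous.comp hDc
  -- periodicity of g
  have hgper : ∀ (θ : Fin m → ℝ) (z : Fin m → ℤ), g (θ + fun i => (z i : ℝ)) = g θ := by
    intro θ z
    simp only [hgdef, hper θ z, hDper θ z]
  -- the conformal recursion: g (θ + β) = a * g θ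
  have hrec : ∀ θ, g (θ + β) = a * g θ := by
    intro θ
    have hcomp : (fun ψ => j (ψ + β)) = f ∘ j := by
      funext ψ; exact (hconj ψ).symm
    have hD : fderiv ℝ j (θ + β) = (fderiv ℝ f (j θ)).comp (fderiv ℝ j θ) := by
      rw [← hshift β θ, hcomp, fderiv_comp θ (hf (j θ)) (hjd θ)]
    simp only [hgdef, ← hconj θ, hD, ContinuousLinearMap.comp_apply]
    exact hpull (j θ) (fderiv ℝ j θ u) (fderiv ℝ j θ v)
  -- boundedness of g
  have hK : IsCompact (Set.Icc (0 : Fin m → ℝ) 1) := isCompact_Icc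
  obtain ⟨C, hC⟩ := hK.exists_bound_of_continuousOn hgc.continuousOn
  have hbd : ∀ ψ, |g ψ| ≤ C := by
    intro ψ
    have hfr : (fun i => Int.fract (ψ i)) ∈ Set.Icc (0 : Fin m → ℝ) 1 := by
      constructor
      · intro i; exact Int.fract_nonneg _
      · intro i; exact (Int.fract_lt_one _).le
    have heq : ((fun i => Int.fract (ψ i)) + fun i => ((⌊ψ i⌋ : ℤ) : ℝ)) = ψ := by
      funext i; exact Int.fract_add_floor (ψ i)
    calc |g ψ| = |g (fun i => Int.fract (ψ i))| := by
          rw [← hgper (fun i => Int.fract (ψ i)) (fun i => ⌊ψ i⌋), heq]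
      _ ≤ C := by simpa using hC _ hfr
  -- iterate the recursion
  have hiter : ∀ n : ℕ, g θ₀ = a ^ n * g (θ₀ - n • β) := by
    intro n
    induction n with
    | zero => simp
    | succ n ih =>
      have : θ₀ - n • β = (θ₀ - (n + 1) • β) + β := by
        rw [succ_nsmul]; abel
      rw [ih, this, hrec, pow_succ]; ring
  -- conclude
  have hfin : ∀ n : ℕ, |g θ₀| ≤ a ^ n * C := by
    intro n
    rw [hiter n, abs_mul, abs_pow, abs_of_pos ha.1]
    exact mul_le_mul_of_nonneg_left (hbd _) (pow_nonneg ha.1.le n)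
  have htend : Filter.Tendsto (fun n : ℕ => a ^ n * C) Filter.atTop (nhds 0) := by
    simpa using (tendsto_pow_atTop_nhds_zero_of_abs_lt_one
      (by rw [abs_of_pos ha.1]; exact ha.2)).mul_const C
  have : |g θ₀| ≤ 0 := ge_of_tendsto' htend hfin
  exact abs_nonpos_iff.mp this
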